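/- Fix H ∈ (1/2, 1) and 0 ≤ s < r < u < t. Then ∫₀^r K_H(r,v)(K_H(t,v) - K_H(u,v)) dv - ∫₀^s K_H(s,v)(K_H(t,v) - K_H(u,v)) dv = (1/2)[ (t-s)^{2H} - (u-s)^{2H} - (t-r)^{2H} + (u-r)^{2H} ]. -/

import Mathlib

open MeasureTheory Set
open scoped ENNReal

/-- Normalizing constant of the Volterra kernel for `H > 1/2`. -/
noncomputable def cH (H : ℝ) : ℝ :=
  Real.sqrt (H * (2 * H - 1) / ∫ x in Ioo (0:ℝ) 1, (1 - x) ^ (1 - 2 * H) * x ^ (H - 3/2))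

/-- Volterra kernel for `H > 1/2`, extended by `0` for `s ≥ t`. -/
noncomputable def KH (H t s : ℝ) : ℝ :=
  if s < t then
    cH H * s ^ ((1:ℝ)/2 - H) * ∫ w in Ioo s t, (w - s) ^ (H - 3/2) * w ^ (H - 1/2)
  else 0

namespace KHaux

lemma integrableOn_rpow_Ioo {c r : ℝ} (hr : -1 < r) :
    IntegrableOn (fun x : ℝ => x ^ r) (Ioo 0 c) := by
  rcases le_or_gt c 0 with h | h
  · rw [Ioo_eq_empty (not_lt.2 h)]; exact integrableOn_empty
  · have := intervalIntegral.intervalIntegrable_rpow' (a := 0) (b := c) hr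
    rw [intervalIntegrable_iff_integrableOn_Ioc_of_le h.le] at this
    exact this.mono_set Ioo_subset_Ioc_self

lemma integrableOn_sub_rpow_Ioo {a c r : ℝ} (hr : -1 < r) :
    IntegrableOn (fun x : ℝ => (c - x) ^ r) (Ioo a c) := by
  rcases le_or_gt c a with h | h
  · rw [Ioo_eq_empty (not_lt.2 h)]; exact integrableOn_empty
  · have h2 := (intervalIntegral.intervalIntegrable_rpow' (a := 0) (b := c - a) hr).comp_sub_left c
    rw [show c - 0 = c by ring, show c - (c - a) = a by ring] at h2
    have h3 := h2.symm
    rw [intervalIntegrable_iff_integrableOn_Ioc_of_le h.le] at h3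
    exact h3.mono_set Ioo_subset_Ioc_self

lemma measurable_beta (H : ℝ) : Measurable (fun x : ℝ => (1 - x) ^ (1 - 2*H) * x ^ (H - 3/2)) :=
  ((measurable_const.sub measurable_id').pow_const _).mul (measurable_id'.pow_const _)

lemma beta_integrable {H : ℝ} (h1 : 1/2 < H) (h2 : H < 1) :
    IntegrableOn (fun x : ℝ => (1 - x) ^ (1 - 2*H) * x ^ (H - 3/2)) (Ioo (0:ℝ) 1) := by
  have hIoo : Ioo (0:ℝ) 1 = Ioo 0 (1/2) ∪ Ico (1/2) 1 := by
    ext x; simp only [mem_Ioo, mem_union, mem_Ico]; constructor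
    · rintro ⟨ha, hb⟩; rcases lt_or_ge x (1/2) with h | h
      · exact Or.inl ⟨ha, h⟩
      · exact Or.inr ⟨h, hb⟩
    · rintro (⟨ha, hb⟩ | ⟨ha, hb⟩) <;> constructor <;> linarith
  rw [hIoo]
  apply IntegrableOn.union
  · have hbase : IntegrableOn (fun x : ℝ => (1/2 : ℝ) ^ (1 - 2*H) * x ^ (H - 3/2)) (Ioo 0 (1/2)) :=
      (integrableOn_rpow_Ioo (by linarith)).const_mul _
    refine Integrable.mono hbase ((measurable_beta H).aestronglyMeasurable) ?_
    filter_upwards [ae_restrict_mem measurableSet_Ioo] with x hx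
    have hx0 : (0:ℝ) < x := hx.1
    have hx1 : x < 1/2 := hx.2
    rw [Real.norm_eq_abs, Real.norm_eq_abs,
      abs_of_nonneg (mul_nonneg (Real.rpow_nonneg (by linarith) _) (Real.rpow_nonneg hx0.le _)),
      abs_of_nonneg (mul_nonneg (Real.rpow_nonneg (by norm_num) _) (Real.rpow_nonneg hx0.le _))]
    exact mul_le_mul_of_nonneg_right
      (Real.rpow_le_rpow_of_nonpos (by norm_num) (by linarith) (by linarith))
      (Real.rpow_nonneg hx0.le _)
  · have hbase : IntegrableOn (fun x : ℝ => (1 - x) ^ (1 - 2*H) * (1/2 : ℝ) ^ (H - 3/2)) (Ico (1/2:ℝ) 1) := by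
      have := (integrableOn_sub_rpow_Ioo (a := (1/2:ℝ)) (c := 1) (r := 1 - 2*H) (by linarith))
      have h1x : (fun x : ℝ => (1 - x) ^ (1 - 2*H)) = (fun x : ℝ => ((1:ℝ) - x) ^ (1 - 2*H)) := rfl
      have hico : IntegrableOn (fun x : ℝ => ((1:ℝ) - x) ^ (1 - 2*H)) (Ico (1/2:ℝ) 1) :=
        (integrableOn_sub_rpow_Ioo (by linarith)).congr_set_ae Ioo_ae_eq_Ico.symm
      exact hico.mul_const _
    refine Integrable.mono hbase ((measurable_beta H).aestronglyMeasurable) ?_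
    filter_upwards [ae_restrict_mem measurableSet_Ico] with x hx
    have hx0 : (1/2:ℝ) ≤ x := hx.1
    have hx1 : x < 1 := hx.2
    rw [Real.norm_eq_abs, Real.norm_eq_abs,
      abs_of_nonneg (mul_nonneg (Real.rpow_nonneg (by linarith) _)
        (Real.rpow_nonneg (le_trans (by norm_num : (0:ℝ) ≤ 1/2) hx0) _)),
      abs_of_nonneg (mul_nonneg (Real.rpow_nonneg (by linarith) _) (Real.rpow_nonneg (by norm_num) _))]
    exact mul_le_mul_of_nonneg_left
      (Real.rpow_le_rpow_of_nonpos (by norm_num) hx0 (by linarith))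
      (Real.rpow_nonneg (by linarith) _)

noncomputable def Iq (H : ℝ) : ℝ := ∫ x in Ioo (0:ℝ) 1, (1 - x) ^ (1 - 2 * H) * x ^ (H - 3/2)


lemma Iq_pos {H : ℝ} (h1 : 1/2 < H) (h2 : H < 1) : 0 < Iq H := by
  rw [Iq, setIntegral_pos_iff_support_of_nonneg_ae]
  · have : Ioo (0:ℝ) 1 ⊆ Function.support (fun x : ℝ => (1 - x) ^ (1 - 2*H) * x ^ (H - 3/2)) := by
      intro x hx
      have : (0:ℝ) < (1 - x) ^ (1 - 2*H) * x ^ (H - 3/2) :=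
        mul_pos (Real.rpow_pos_of_pos (by linarith [hx.2]) _) (Real.rpow_pos_of_pos hx.1 _)
      exact ne_of_gt this
    rw [inter_eq_right.mpr this, Real.volume_Ioo]
    norm_num
  · filter_upwards [ae_restrict_mem measurableSet_Ioo] with x hx
    exact mul_nonneg (Real.rpow_nonneg (by linarith [hx.2]) _) (Real.rpow_nonneg hx.1.le _)
  · exact beta_integrable h1 h2

lemma cH_sq {H : ℝ} (h1 : 1/2 < H) (h2 : H < 1) : cH H ^ 2 = H * (2*H - 1) / Iq H := by
  have h : cH H = Real.sqrt (H * (2*H - 1) / Iq H) := rfl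
  rw [h, Real.sq_sqrt (div_nonneg (by nlinarith) (Iq_pos h1 h2).le)]

lemma J_integrable {H v t : ℝ} (h1 : 1/2 < H) (hv : 0 < v) (hvt : v < t) :
    IntegrableOn (fun w : ℝ => (w - v) ^ (H - 3/2) * w ^ (H - 1/2)) (Ioo v t) := by
  have hbase : IntegrableOn (fun w : ℝ => (w - v) ^ (H - 3/2)) (Ioo v t) := by
    have h2 := (intervalIntegral.intervalIntegrable_rpow' (a := 0) (b := t - v)
      (r := H - 3/2) (by linarith)).comp_sub_right v
    rw [show (0:ℝ) + v = v by ring, show t - v + v = t by ring] at h2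
    rw [intervalIntegrable_iff_integrableOn_Ioc_of_le hvt.le] at h2
    exact h2.mono_set Ioo_subset_Ioc_self
  have hicc : IntegrableOn (fun w : ℝ => (w - v) ^ (H - 3/2)) (Icc v t) :=
    hbase.congr_set_ae Ioo_ae_eq_Icc.symm
  have hcont : ContinuousOn (fun w : ℝ => w ^ (H - 1/2)) (Icc v t) := by
    apply ContinuousOn.rpow_const continuousOn_id
    intro w hw; exact Or.inl (ne_of_gt (lt_of_lt_of_le hv hw.1))
  exact (hicc.mul_continuousOn hcont isCompact_Icc).mono_set Ioo_subset_Icc_self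

lemma measurable_KH (H t : ℝ) : Measurable (fun v => KH H t v) := by
  have hF : Measurable (fun p : ℝ × ℝ =>
      (Ioo p.1 t).indicator (fun w => (w - p.1) ^ (H - 3/2) * w ^ (H - 1/2)) p.2) := by
    have : Measurable (fun p : ℝ × ℝ =>
        if p.1 < p.2 ∧ p.2 < t then (p.2 - p.1) ^ (H - 3/2) * p.2 ^ (H - 1/2) else 0) := by
      refine Measurable.ite ?_ (((measurable_snd.sub measurable_fst).pow_const _).mul
        (measurable_snd.pow_const _)) measurable_const
      exact MeasurableSet.inter (measurableSet_lt measurable_fst measurable_snd)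
        (measurableSet_lt measurable_snd measurable_const)
    convert this using 1
    ext p
    by_cases h : p.1 < p.2 ∧ p.2 < t
    · rw [indicator_of_mem (by exact ⟨h.1, h.2⟩), if_pos h]
    · rw [indicator_of_notMem (by simpa [mem_Ioo] using h), if_neg h]
  have hG : Measurable (fun v : ℝ => ∫ w in Ioo v t, (w - v) ^ (H - 3/2) * w ^ (H - 1/2)) := by
    have := (hF.stronglyMeasurable).integral_prod_right' (ν := volume)
    have heq : (fun v : ℝ => ∫ w in Ioo v t, (w - v) ^ (H - 3/2) * w ^ (H - 1/2))
        = fun v : ℝ => ∫ w, (Ioo v t).indicator (fun w => (w - v) ^ (H - 3/2) * w ^ (H - 1/2)) w := by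
      ext v; rw [integral_indicator measurableSet_Ioo]
    rw [heq]
    exact this.measurable
  have : (fun v => KH H t v) = fun v =>
      if v < t then cH H * v ^ ((1:ℝ)/2 - H) * (fun v : ℝ => ∫ w in Ioo v t, (w - v) ^ (H - 3/2) * w ^ (H - 1/2)) v else 0 := rfl
  rw [this]
  exact Measurable.ite (measurableSet_lt measurable_id measurable_const)
    ((measurable_const.mul (measurable_id'.pow_const _)).mul hG) measurable_const

lemma KH_nonneg {H t v : ℝ} (hv : 0 ≤ v) : 0 ≤ KH H t v := by
  rw [KH]
  split_ifs with h
  · refine mul_nonneg (mul_nonneg (Real.sqrt_nonneg _) (Real.rpow_nonneg hv _)) ?_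
    refine setIntegral_nonneg measurableSet_Ioo (fun w hw => ?_)
    exact mul_nonneg (Real.rpow_nonneg (by linarith [hw.1]) _)
      (Real.rpow_nonneg (by linarith [hw.1]) _)
  · exact le_refl 0

noncomputable def ψ (w z v : ℝ) : ℝ := z * (w - v) / (w * (z - v))

lemma psi_deriv {w z : ℝ} (hw : 0 < w) (hwz : w < z) {v : ℝ} (hv : v ∈ Ioo 0 w) :
    HasDerivWithinAt (ψ w z) (-(z * w * (z - w)) / (w * (z - v))^2) (Ioo 0 w) v := by
  have hB : 0 < z - v := by have := hv.2; linarith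
  have hden : w * (z - v) ≠ 0 := ne_of_gt (by positivity)
  have hnum : HasDerivAt (fun v : ℝ => z * (w - v)) (z * (-1)) v :=
    ((hasDerivAt_id v).const_sub w).const_mul z
  have hden' : HasDerivAt (fun v : ℝ => w * (z - v)) (w * (-1)) v :=
    ((hasDerivAt_id v).const_sub z).const_mul w
  have h := hnum.div hden' hden
  have : (z * (-1) * (w * (z - v)) - z * (w - v) * (w * (-1))) / (w * (z - v)) ^ 2
      = -(z * w * (z - w)) / (w * (z - v))^2 := by
    rw [div_eq_div_iff (by positivity) (by positivity)]; ring
  rw [this] at h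
  exact h.hasDerivWithinAt

lemma psi_image {w z : ℝ} (hw : 0 < w) (hwz : w < z) : ψ w z '' Ioo 0 w = Ioo 0 1 := by
  ext x
  constructor
  · rintro ⟨v, hv, rfl⟩
    have hv0 := hv.1; have hvw := hv.2
    have hB : 0 < z - v := by linarith
    refine ⟨div_pos (by nlinarith) (by positivity), ?_⟩
    rw [ψ, div_lt_one (by positivity)]; nlinarith
  · rintro ⟨hx0, hx1⟩
    have hzxw : 0 < z - x * w := by nlinarith
    set v := w * z * (1 - x) / (z - x * w) with hv
    have hD : z - x * w ≠ 0 := hzxw.ne'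
    have hzv : z - v = z * (z - w) / (z - x * w) := by
      rw [hv]; linear_combination (-z) * mul_inv_cancel₀ hD
    have hzvpos : 0 < z - v := by rw [hzv]; apply div_pos (by nlinarith) hzxw
    have hz : 0 < z := lt_trans hw hwz
    have h1x : 0 < 1 - x := by linarith
    refine ⟨v, ⟨?_, ?_⟩, ?_⟩
    · apply div_pos (by positivity) hzxw
    · rw [hv, div_lt_iff₀ hzxw]
      nlinarith [mul_pos hx0 (mul_pos hw (sub_pos.2 hwz))]
    · rw [ψ, div_eq_iff (ne_of_gt (by positivity : (0:ℝ) < w * (z - v)))]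
      rw [hzv, hv]; linear_combination (-w*z) * mul_inv_cancel₀ hD
  
lemma psi_injOn {w z : ℝ} (hw : 0 < w) (hwz : w < z) : InjOn (ψ w z) (Ioo 0 w) := by
  intro a ha b hb hab
  have hZa : 0 < z - a := by have := ha.2; linarith
  have hZb : 0 < z - b := by have := hb.2; linarith
  rw [ψ, ψ, div_eq_div_iff (by positivity) (by positivity)] at hab
  have key : (a - b) * (z * w * (w - z)) = 0 := by linear_combination hab
  rcases mul_eq_zero.1 key with h | h
  · linarith
  · exfalso
    have hlt : z * w * (w - z) < 0 := by
      nlinarith [mul_pos (mul_pos (lt_trans hw hwz) hw) (sub_pos.2 hwz)]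
    linarith


lemma betaSub {H w z : ℝ} (h1 : 1/2 < H) (h2 : H < 1) (hw : 0 < w) (hwz : w < z) :
    IntegrableOn (fun v : ℝ => v ^ (1 - 2*H) * ((w - v) ^ (H - 3/2) * (z - v) ^ (H - 3/2))) (Ioo 0 w)
    ∧ ∫ v in Ioo (0:ℝ) w, v ^ (1 - 2*H) * ((w - v) ^ (H - 3/2) * (z - v) ^ (H - 3/2))
      = (w*z) ^ ((1:ℝ)/2 - H) * (z - w) ^ (2*H - 2) * Iq H := by
  set g : ℝ → ℝ := fun x => (1 - x) ^ (1 - 2*H) * x ^ (H - 3/2) with hg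
  set f' : ℝ → ℝ := fun v => -(z * w * (z - w)) / (w * (z - v))^2 with hf'
  set tgt : ℝ → ℝ := fun v : ℝ => v ^ (1 - 2*H) * ((w - v) ^ (H - 3/2) * (z - v) ^ (H - 3/2)) with htgt
  set C : ℝ := (w*z) ^ (H - 1/2) * (z - w) ^ (2 - 2*H) with hC
  have hz : 0 < z := lt_trans hw hwz
  have hzw : 0 < z - w := sub_pos.2 hwz
  have hCpos : 0 < C := mul_pos (Real.rpow_pos_of_pos (by positivity) _) (Real.rpow_pos_of_pos hzw _)
  have key : EqOn (fun v => |f' v| • g (ψ w z v)) (fun v => C * tgt v) (Ioo 0 w) := by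
    intro v hv
    have hv0 : 0 < v := hv.1
    have hwv : 0 < w - v := sub_pos.2 hv.2
    have hzv : 0 < z - v := by linarith [hv.2]
    have h1ψ : 1 - ψ w z v = v * (z - w) / (w * (z - v)) := by
      rw [ψ]; field_simp; ring
    have hψ : ψ w z v = z * (w - v) / (w * (z - v)) := rfl
    simp only [hf', hg, htgt, hC, smul_eq_mul]
    rw [neg_div, abs_neg, abs_of_nonneg (by positivity), h1ψ, hψ]
    have hLpos : 0 < z * w * (z - w) / (w * (z - v)) ^ 2 *
        ((v * (z - w) / (w * (z - v))) ^ (1 - 2*H) * (z * (w - v) / (w * (z - v))) ^ (H - 3/2)) := by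
      have b1 : (0:ℝ) < v * (z - w) / (w * (z - v)) := by positivity
      have b2 : (0:ℝ) < z * (w - v) / (w * (z - v)) := by positivity
      positivity
    have hRpos : 0 < (w*z) ^ (H - 1/2) * (z - w) ^ (2 - 2*H) *
        (v ^ (1 - 2*H) * ((w - v) ^ (H - 3/2) * (z - v) ^ (H - 3/2))) := by
      have b1 : (0:ℝ) < (w*z) ^ (H - 1/2) := Real.rpow_pos_of_pos (by positivity) _
      positivity
    rw [← Real.exp_log hLpos, ← Real.exp_log hRpos]
    congr 1
    simp (disch := positivity) only [Real.log_mul, Real.log_div, Real.log_rpow, Real.log_pow]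
    push_cast; ring
  have hms : MeasurableSet (Ioo (0:ℝ) w) := measurableSet_Ioo
  have hderiv : ∀ v ∈ Ioo (0:ℝ) w, HasDerivWithinAt (ψ w z) (f' v) (Ioo 0 w) v :=
    fun v hv => psi_deriv hw hwz hv
  have hinj := psi_injOn hw hwz
  have himg := psi_image hw hwz
  have hInt0 : IntegrableOn g (ψ w z '' Ioo 0 w) := by rw [himg]; exact beta_integrable h1 h2
  have hIntPull : IntegrableOn (fun v => |f' v| • g (ψ w z v)) (Ioo 0 w) :=
    (integrableOn_image_iff_integrableOn_abs_deriv_smul hms hderiv hinj g).1 hInt0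
  have hIntC : IntegrableOn (fun v => C * tgt v) (Ioo 0 w) := hIntPull.congr_fun key hms
  have hIntTgt : IntegrableOn tgt (Ioo 0 w) := by
    have h' := hIntC.const_mul C⁻¹
    exact IntegrableOn.congr_fun h' (fun v _ => by
      simp only [← mul_assoc, inv_mul_cancel₀ (ne_of_gt hCpos), one_mul]) hms
  refine ⟨hIntTgt, ?_⟩
  have hIq : Iq H = ∫ v in Ioo (0:ℝ) w, |f' v| • g (ψ w z v) := by
    rw [Iq, ← hg, ← himg, integral_image_eq_integral_abs_deriv_smul hms hderiv hinj]
  rw [setIntegral_congr_fun hms key, integral_const_mul] at hIq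
  have hCinv : (w*z) ^ ((1:ℝ)/2 - H) * (z - w) ^ (2*H - 2) = C⁻¹ := by
    rw [hC, show (1:ℝ)/2 - H = -(H - 1/2) by ring, show 2*H - 2 = -(2 - 2*H) by ring,
      Real.rpow_neg (by positivity), Real.rpow_neg hzw.le, mul_inv]
  rw [hCinv, hIq, ← mul_assoc, inv_mul_cancel₀ (ne_of_gt hCpos), one_mul]

lemma lswap1 {a : ℝ} {F : ℝ → ℝ → ℝ≥0∞} (hF : Measurable (Function.uncurry F)) :
    ∫⁻ v in Ioo 0 a, ∫⁻ w in Ioo v a, F v w = ∫⁻ w in Ioo 0 a, ∫⁻ v in Ioo 0 w, F v w := by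
  set S : Set (ℝ × ℝ) := {p | 0 < p.1 ∧ p.1 < p.2 ∧ p.2 < a} with hS
  have hSm : MeasurableSet S :=
    (measurableSet_lt measurable_const measurable_fst).inter
      ((measurableSet_lt measurable_fst measurable_snd).inter
        (measurableSet_lt measurable_snd measurable_const))
  set G : ℝ → ℝ → ℝ≥0∞ := fun v w => S.indicator (Function.uncurry F) (v, w) with hG
  have hGm : Measurable (Function.uncurry G) := hF.indicator hSm
  have hA : ∫⁻ v in Ioo 0 a, ∫⁻ w in Ioo v a, F v w = ∫⁻ v, ∫⁻ w, G v w := by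
    rw [← lintegral_indicator measurableSet_Ioo]
    congr 1; funext v
    by_cases hv : v ∈ Ioo 0 a
    · rw [indicator_of_mem hv, ← lintegral_indicator measurableSet_Ioo]
      congr 1; funext w
      by_cases hw : w ∈ Ioo v a
      · rw [indicator_of_mem hw, hG]
        exact (indicator_of_mem (show (v,w) ∈ S from ⟨hv.1, hw.1, hw.2⟩) (Function.uncurry F)).symm
      · rw [indicator_of_notMem hw, hG]
        exact (indicator_of_notMem (fun hmem => hw ⟨hmem.2.1, hmem.2.2⟩) (Function.uncurry F)).symm
    · rw [indicator_of_notMem hv]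
      symm
      have h0 : ∀ w, G v w = 0 := fun w => by
        exact indicator_of_notMem (fun hmem => hv ⟨hmem.1, lt_trans hmem.2.1 hmem.2.2⟩) (Function.uncurry F)
      simp [h0]
  have hB : ∫⁻ w in Ioo 0 a, ∫⁻ v in Ioo 0 w, F v w = ∫⁻ w, ∫⁻ v, G v w := by
    rw [← lintegral_indicator measurableSet_Ioo]
    congr 1; funext w
    by_cases hw : w ∈ Ioo 0 a
    · rw [indicator_of_mem hw, ← lintegral_indicator measurableSet_Ioo]
      congr 1; funext v
      by_cases hv : v ∈ Ioo 0 w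
      · rw [indicator_of_mem hv, hG]
        exact (indicator_of_mem (show (v,w) ∈ S from ⟨hv.1, hv.2, hw.2⟩) (Function.uncurry F)).symm
      · rw [indicator_of_notMem hv, hG]
        exact (indicator_of_notMem (fun hmem => hv ⟨hmem.1, hmem.2.1⟩) (Function.uncurry F)).symm
    · rw [indicator_of_notMem hw]
      symm
      have h0 : ∀ v, G v w = 0 := fun v => by
        exact indicator_of_notMem (fun hmem => hw ⟨lt_trans hmem.1 hmem.2.1, hmem.2.2⟩) (Function.uncurry F)
      simp [h0]
  rw [hA, hB, lintegral_lintegral_swap hGm.aemeasurable]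

lemma lswap2 {c b : ℝ} (hcb : c ≤ b) {F : ℝ → ℝ → ℝ≥0∞} (hF : Measurable (Function.uncurry F)) :
    ∫⁻ v in Ioo 0 c, ∫⁻ z in Ioo v b, F v z = ∫⁻ z in Ioo 0 b, ∫⁻ v in Ioo 0 (min c z), F v z := by
  set S : Set (ℝ × ℝ) := {p | 0 < p.1 ∧ p.1 < c ∧ p.1 < p.2 ∧ p.2 < b} with hS
  have hSm : MeasurableSet S :=
    (measurableSet_lt measurable_const measurable_fst).inter
      (((measurableSet_lt measurable_fst measurable_const)).inter
        ((measurableSet_lt measurable_fst measurable_snd).inter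
          (measurableSet_lt measurable_snd measurable_const)))
  set G : ℝ → ℝ → ℝ≥0∞ := fun v z => S.indicator (Function.uncurry F) (v, z) with hG
  have hGm : Measurable (Function.uncurry G) := hF.indicator hSm
  have hA : ∫⁻ v in Ioo 0 c, ∫⁻ z in Ioo v b, F v z = ∫⁻ v, ∫⁻ z, G v z := by
    rw [← lintegral_indicator measurableSet_Ioo]
    congr 1; funext v
    by_cases hv : v ∈ Ioo 0 c
    · rw [indicator_of_mem hv, ← lintegral_indicator measurableSet_Ioo]
      congr 1; funext z
      by_cases hz : z ∈ Ioo v b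
      · rw [indicator_of_mem hz, hG]
        exact (indicator_of_mem (show (v,z) ∈ S from ⟨hv.1, hv.2, hz.1, hz.2⟩) (Function.uncurry F)).symm
      · rw [indicator_of_notMem hz, hG]
        exact (indicator_of_notMem (fun hmem => hz ⟨hmem.2.2.1, hmem.2.2.2⟩) (Function.uncurry F)).symm
    · rw [indicator_of_notMem hv]
      symm
      have h0 : ∀ z, G v z = 0 := fun z => by
        exact indicator_of_notMem (fun hmem => hv ⟨hmem.1, hmem.2.1⟩) (Function.uncurry F)
      simp [h0]
  have hB : ∫⁻ z in Ioo 0 b, ∫⁻ v in Ioo 0 (min c z), F v z = ∫⁻ z, ∫⁻ v, G v z := by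
    rw [← lintegral_indicator measurableSet_Ioo]
    congr 1; funext z
    by_cases hz : z ∈ Ioo 0 b
    · rw [indicator_of_mem hz, ← lintegral_indicator measurableSet_Ioo]
      congr 1; funext v
      by_cases hv : v ∈ Ioo 0 (min c z)
      · have hv' := hv
        rw [mem_Ioo, lt_min_iff] at hv'
        rw [indicator_of_mem hv, hG]
        exact (indicator_of_mem (show (v,z) ∈ S from ⟨hv'.1, hv'.2.1, hv'.2.2, hz.2⟩) (Function.uncurry F)).symm
      · rw [indicator_of_notMem hv, hG]
        exact (indicator_of_notMem (fun hmem =>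
          hv (mem_Ioo.2 ⟨hmem.1, lt_min_iff.2 ⟨hmem.2.1, hmem.2.2.1⟩⟩)) (Function.uncurry F)).symm
    · rw [indicator_of_notMem hz]
      symm
      have h0 : ∀ v, G v z = 0 := fun v => by
        exact indicator_of_notMem (fun hmem => hz ⟨lt_trans hmem.1 hmem.2.2.1, hmem.2.2.2⟩) (Function.uncurry F)
      simp [h0]
  rw [hA, hB, lintegral_lintegral_swap hGm.aemeasurable]

noncomputable def eE (H : ℝ) : ℝ × ℝ → ℝ≥0∞ :=
  fun p => ENNReal.ofReal ((p.2 - p.1) ^ (H - 3/2) * p.2 ^ (H - 1/2))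

lemma measurable_eE (H : ℝ) : Measurable (eE H) :=
  (((measurable_snd.sub measurable_fst).pow_const _).mul (measurable_snd.pow_const _)).ennreal_ofReal

lemma measurable_B (H b : ℝ) :
    Measurable (fun v : ℝ => ∫⁻ z in Ioo v b, eE H (v, z)) := by
  have hset : MeasurableSet {p : ℝ × ℝ | p.1 < p.2 ∧ p.2 < b} :=
    (measurableSet_lt measurable_fst measurable_snd).inter
      (measurableSet_lt measurable_snd measurable_const)
  have heq : (fun v : ℝ => ∫⁻ z in Ioo v b, eE H (v, z))
      = fun v => ∫⁻ z, ({p : ℝ × ℝ | p.1 < p.2 ∧ p.2 < b}).indicator (eE H) (v, z) := by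
    funext v
    rw [← lintegral_indicator measurableSet_Ioo]
    refine lintegral_congr (fun z => ?_)
    by_cases hz : z ∈ Ioo v b
    · rw [indicator_of_mem hz]
      exact (indicator_of_mem (show ((v,z) : ℝ × ℝ) ∈ {p : ℝ × ℝ | p.1 < p.2 ∧ p.2 < b}
        from ⟨hz.1, hz.2⟩) (eE H)).symm
    · rw [indicator_of_notMem hz]
      exact (indicator_of_notMem (fun hmem => hz ⟨hmem.1, hmem.2⟩) (eE H)).symm
  rw [heq]
  exact Measurable.lintegral_prod_right' ((measurable_eE H).indicator hset)

lemma J_nonneg {H t v : ℝ} (hv : 0 ≤ v) :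
    0 ≤ ∫ w in Ioo v t, (w - v) ^ (H - 3/2) * w ^ (H - 1/2) := by
  refine setIntegral_nonneg measurableSet_Ioo (fun w hw => ?_)
  exact mul_nonneg (Real.rpow_nonneg (by linarith [hw.1]) _)
    (Real.rpow_nonneg (by linarith [hw.1]) _)

lemma ofReal_J {H v t : ℝ} (h1 : 1/2 < H) (hv : 0 < v) (hvt : v < t) :
    ENNReal.ofReal (∫ w in Ioo v t, (w - v) ^ (H - 3/2) * w ^ (H - 1/2))
      = ∫⁻ w in Ioo v t, eE H (v, w) := by
  refine ofReal_integral_eq_lintegral_ofReal (J_integrable h1 hv hvt) ?_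
  filter_upwards [ae_restrict_mem measurableSet_Ioo] with w hw
  exact mul_nonneg (Real.rpow_nonneg (by linarith [hw.1]) _)
    (Real.rpow_nonneg (by linarith [hw.1]) _)

lemma set_integral_rpow {a r : ℝ} (hr : -1 < r) (ha : 0 ≤ a) :
    ∫ x in Ioo (0:ℝ) a, x ^ r = a ^ (r+1) / (r+1) := by
  rw [setIntegral_congr_set Ioo_ae_eq_Ioc, ← intervalIntegral.integral_of_le ha,
    integral_rpow (Or.inl hr),
    Real.zero_rpow (by linarith : r + 1 ≠ 0), sub_zero]

lemma set_integral_rpow_sub_right {v t r : ℝ} (hr : -1 < r) (hvt : v ≤ t) :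
    ∫ w in Ioo v t, (w - v) ^ r = (t - v) ^ (r+1) / (r+1) := by
  rw [setIntegral_congr_set Ioo_ae_eq_Ioc, ← intervalIntegral.integral_of_le hvt,
    intervalIntegral.integral_comp_sub_right (fun x => x ^ r) v, sub_self,
    integral_rpow (Or.inl hr),
    Real.zero_rpow (by linarith : r + 1 ≠ 0), sub_zero]

lemma set_integral_rpow_sub_left {v t r : ℝ} (hr : -1 < r) (hvt : v ≤ t) :
    ∫ w in Ioo v t, (t - w) ^ r = (t - v) ^ (r+1) / (r+1) := by
  rw [setIntegral_congr_set Ioo_ae_eq_Ioc, ← intervalIntegral.integral_of_le hvt,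
    intervalIntegral.integral_comp_sub_left (fun x => x ^ r) t, sub_self,
    integral_rpow (Or.inl hr),
    Real.zero_rpow (by linarith : r + 1 ≠ 0), sub_zero]

lemma set_integral_rpow_sub_left' {b a r : ℝ} (hr : -1 < r) (h0 : 0 ≤ a) (hab : a ≤ b) :
    ∫ w in Ioo (0:ℝ) a, (b - w) ^ r = (b ^ (r+1) - (b - a) ^ (r+1)) / (r+1) := by
  rw [setIntegral_congr_set Ioo_ae_eq_Ioc, ← intervalIntegral.integral_of_le h0,
    intervalIntegral.integral_comp_sub_left (fun x => x ^ r) b, sub_zero,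
    integral_rpow (Or.inl hr)]

lemma integrableOn_rpow_sub_right {v t r : ℝ} (hr : -1 < r) (hvt : v < t) :
    IntegrableOn (fun w : ℝ => (w - v) ^ r) (Ioo v t) := by
  have h2 := (intervalIntegral.intervalIntegrable_rpow' (a := 0) (b := t - v)
    (r := r) hr).comp_sub_right v
  rw [show (0:ℝ) + v = v by ring, show t - v + v = t by ring] at h2
  rw [intervalIntegrable_iff_integrableOn_Ioc_of_le hvt.le] at h2
  exact h2.mono_set Ioo_subset_Ioc_self

lemma betaSub' {H w z : ℝ} (h1 : 1/2 < H) (h2 : H < 1) (hw : 0 < w) (hz : 0 < z) (hne : w ≠ z) :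
    IntegrableOn (fun v : ℝ => v ^ (1 - 2*H) * ((w - v) ^ (H - 3/2) * (z - v) ^ (H - 3/2)))
      (Ioo 0 (min w z))
    ∧ ∫ v in Ioo (0:ℝ) (min w z), v ^ (1 - 2*H) * ((w - v) ^ (H - 3/2) * (z - v) ^ (H - 3/2))
      = (w*z) ^ ((1:ℝ)/2 - H) * |z - w| ^ (2*H - 2) * Iq H := by
  rcases lt_or_gt_of_ne hne with h | h
  · rw [min_eq_left h.le]
    have := betaSub h1 h2 hw h
    rw [abs_of_pos (by linarith : (0:ℝ) < z - w)]
    exact this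
  · rw [min_eq_right h.le]
    have := betaSub h1 h2 hz h
    have hcomm : (fun v : ℝ => v ^ (1 - 2*H) * ((z - v) ^ (H - 3/2) * (w - v) ^ (H - 3/2)))
        = (fun v : ℝ => v ^ (1 - 2*H) * ((w - v) ^ (H - 3/2) * (z - v) ^ (H - 3/2))) := by
      funext v; ring
    rw [hcomm] at this
    rw [abs_of_neg (by linarith : z - w < 0), neg_sub, mul_comm z w] at *
    exact this

lemma cancel_q {H w z d iq : ℝ} (hw : 0 < w) (hz : 0 < z) :
    (w ^ (H - 1/2) * z ^ (H - 1/2)) * ((w*z) ^ ((1:ℝ)/2 - H) * (d ^ (2*H - 2) * iq))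
      = d ^ (2*H - 2) * iq := by
  rw [Real.mul_rpow hw.le hz.le]
  have e1 : w ^ (H - 1/2) * w ^ ((1:ℝ)/2 - H) = 1 := by
    rw [← Real.rpow_add hw]; norm_num
  have e2 : z ^ (H - 1/2) * z ^ ((1:ℝ)/2 - H) = 1 := by
    rw [← Real.rpow_add hz]; norm_num
  calc (w ^ (H - 1/2) * z ^ (H - 1/2)) * (w ^ ((1:ℝ)/2 - H) * z ^ ((1:ℝ)/2 - H) * (d ^ (2*H - 2) * iq))
      = (w ^ (H - 1/2) * w ^ ((1:ℝ)/2 - H)) * (z ^ (H - 1/2) * z ^ ((1:ℝ)/2 - H)) * (d ^ (2*H - 2) * iq) := by ring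
    _ = d ^ (2*H - 2) * iq := by rw [e1, e2]; ring

lemma Dlem {H w b : ℝ} (h1 : 1/2 < H) (h2 : H < 1) (hw : 0 < w) (hwb : w < b) :
    ∫⁻ z in Ioo (0:ℝ) b, ENNReal.ofReal (|z - w| ^ (2*H - 2))
      = ENNReal.ofReal ((w ^ (2*H - 1) + (b - w) ^ (2*H - 1)) / (2*H - 1)) := by
  have hsplit : Ioo (0:ℝ) b = Ioo 0 w ∪ Ico w b := by
    ext x; simp only [mem_Ioo, mem_union, mem_Ico]; constructor
    · rintro ⟨ha, hb'⟩; rcases lt_or_ge x w with h | h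
      · exact Or.inl ⟨ha, h⟩
      · exact Or.inr ⟨h, hb'⟩
    · rintro (⟨ha, hb'⟩ | ⟨ha, hb'⟩) <;> constructor <;> linarith
  have hdisj : Disjoint (Ioo (0:ℝ) w) (Ico w b) := by
    apply disjoint_left.2; rintro x ⟨_, hxw⟩ ⟨hwx, _⟩; linarith
  rw [hsplit, lintegral_union measurableSet_Ico hdisj]
  have hp1 : ∫⁻ z in Ioo (0:ℝ) w, ENNReal.ofReal (|z - w| ^ (2*H - 2))
      = ENNReal.ofReal (w ^ (2*H - 1) / (2*H - 1)) := by
    rw [setLIntegral_congr_fun_ae measurableSet_Ioo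
      (ae_of_all _ (fun z hz => by rw [abs_of_neg (by linarith [hz.2] : z - w < 0), neg_sub]))]
    rw [← ofReal_integral_eq_lintegral_ofReal (integrableOn_sub_rpow_Ioo (by linarith))
      (by filter_upwards [ae_restrict_mem measurableSet_Ioo] with z hz;
          exact Real.rpow_nonneg (by linarith [hz.2]) _)]
    rw [set_integral_rpow_sub_left (by linarith) hw.le, sub_zero,
      show 2*H - 2 + 1 = 2*H - 1 by ring]
  have hp2 : ∫⁻ z in Ico w b, ENNReal.ofReal (|z - w| ^ (2*H - 2))
      = ENNReal.ofReal ((b - w) ^ (2*H - 1) / (2*H - 1)) := by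
    rw [setLIntegral_congr Ioo_ae_eq_Ico.symm]
    rw [setLIntegral_congr_fun_ae measurableSet_Ioo
      (ae_of_all _ (fun z hz => by rw [abs_of_pos (by linarith [hz.1] : (0:ℝ) < z - w)]))]
    rw [← ofReal_integral_eq_lintegral_ofReal (integrableOn_rpow_sub_right (by linarith) hwb)
      (by filter_upwards [ae_restrict_mem measurableSet_Ioo] with z hz;
          exact Real.rpow_nonneg (by linarith [hz.1]) _)]
    rw [set_integral_rpow_sub_right (by linarith) hwb.le,
      show 2*H - 2 + 1 = 2*H - 1 by ring]
  rw [hp1, hp2, ← ENNReal.ofReal_add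
    (div_nonneg (Real.rpow_nonneg hw.le _) (by linarith))
    (div_nonneg (Real.rpow_nonneg (by linarith) _) (by linarith))]
  congr 1; ring

lemma cov_lintegral {H a b : ℝ} (h1 : 1/2 < H) (h2 : H < 1) (ha : 0 < a) (hab : a ≤ b) :
    ∫⁻ v in Ioo (0:ℝ) a, ENNReal.ofReal (KH H a v * KH H b v)
      = ENNReal.ofReal ((a ^ (2*H) + b ^ (2*H) - (b - a) ^ (2*H)) / 2) := by
  set B : ℝ → ℝ≥0∞ := fun v => ∫⁻ z in Ioo v b, eE H (v, z) with hB
  -- Step 1 : rewrite the integrand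
  have step1 : ∫⁻ v in Ioo (0:ℝ) a, ENNReal.ofReal (KH H a v * KH H b v)
      = ∫⁻ v in Ioo (0:ℝ) a, ENNReal.ofReal ((cH H)^2)
          * (ENNReal.ofReal (v ^ (1 - 2*H)) * ((∫⁻ w in Ioo v a, eE H (v, w)) * B v)) := by
    refine setLIntegral_congr_fun_ae measurableSet_Ioo (ae_of_all _ (fun v hv => ?_))
    have hv0 : 0 < v := hv.1
    have hva : v < a := hv.2
    have hvb : v < b := lt_of_lt_of_le hva hab
    rw [KH, if_pos hva, KH, if_pos hvb]
    have hv2 : v ^ ((1:ℝ)/2 - H) * v ^ ((1:ℝ)/2 - H) = v ^ (1 - 2*H) := by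
      rw [← Real.rpow_add hv0]; congr 1; ring
    have hre : (cH H * v ^ ((1:ℝ)/2 - H) * ∫ w in Ioo v a, (w - v) ^ (H - 3/2) * w ^ (H - 1/2))
        * (cH H * v ^ ((1:ℝ)/2 - H) * ∫ w in Ioo v b, (w - v) ^ (H - 3/2) * w ^ (H - 1/2))
        = (cH H)^2 * (v ^ (1 - 2*H) *
          ((∫ w in Ioo v a, (w - v) ^ (H - 3/2) * w ^ (H - 1/2))
            * ∫ w in Ioo v b, (w - v) ^ (H - 3/2) * w ^ (H - 1/2))) := by
      rw [← hv2]; ring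
    rw [hre, ENNReal.ofReal_mul (sq_nonneg _),
      ENNReal.ofReal_mul (Real.rpow_nonneg hv0.le _),
      ENNReal.ofReal_mul (J_nonneg hv0.le), ofReal_J h1 hv0 hva, ofReal_J h1 hv0 hvb]
  rw [step1, lintegral_const_mul' _ _ ENNReal.ofReal_ne_top]
  -- Step 2 : push constants into the first inner integral
  have step2 : ∫⁻ v in Ioo (0:ℝ) a,
        ENNReal.ofReal (v ^ (1 - 2*H)) * ((∫⁻ w in Ioo v a, eE H (v, w)) * B v)
      = ∫⁻ v in Ioo (0:ℝ) a, ∫⁻ w in Ioo v a,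
          (ENNReal.ofReal (v ^ (1 - 2*H)) * B v) * eE H (v, w) := by
    refine setLIntegral_congr_fun_ae measurableSet_Ioo (ae_of_all _ (fun v _ => ?_))
    rw [lintegral_const_mul _ (show Measurable (fun w => eE H (v, w)) from
      (measurable_eE H).comp measurable_prodMk_left)]
    ring
  rw [step2]
  -- Step 3 : first swap
  have hFm : Measurable (Function.uncurry
      (fun v w => (ENNReal.ofReal (v ^ (1 - 2*H)) * B v) * eE H (v, w))) := by
    exact (((measurable_fst.pow_const _).ennreal_ofReal.mul
      ((measurable_B H b).comp measurable_fst)).mul (measurable_eE H))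
  rw [lswap1 hFm]
  -- Step 4 : inner computation for fixed w
  have step4 : ∫⁻ w in Ioo (0:ℝ) a, ∫⁻ v in Ioo 0 w,
        (ENNReal.ofReal (v ^ (1 - 2*H)) * B v) * eE H (v, w)
      = ∫⁻ w in Ioo (0:ℝ) a,
          ENNReal.ofReal ((w ^ (2*H - 1) + (b - w) ^ (2*H - 1)) / (2*H - 1))
            * ENNReal.ofReal (Iq H) := by
    refine setLIntegral_congr_fun_ae measurableSet_Ioo (ae_of_all _ (fun w hw => ?_))
    have hw0 : 0 < w := hw.1
    have hwa : w < a := hw.2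
    have hwb : w < b := lt_of_lt_of_le hwa hab
    -- expand B and push constants
    have e1 : ∫⁻ v in Ioo (0:ℝ) w, (ENNReal.ofReal (v ^ (1 - 2*H)) * B v) * eE H (v, w)
        = ∫⁻ v in Ioo (0:ℝ) w, ∫⁻ z in Ioo v b,
            (ENNReal.ofReal (v ^ (1 - 2*H)) * eE H (v, w)) * eE H (v, z) := by
      refine setLIntegral_congr_fun_ae measurableSet_Ioo (ae_of_all _ (fun v _ => ?_))
      rw [lintegral_const_mul _ (show Measurable (fun z => eE H (v, z)) from
        (measurable_eE H).comp measurable_prodMk_left)]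
      ring
    have hF2m : Measurable (Function.uncurry
        (fun v z => (ENNReal.ofReal (v ^ (1 - 2*H)) * eE H (v, w)) * eE H (v, z))) := by
      exact (((measurable_fst.pow_const _).ennreal_ofReal.mul
        ((measurable_eE H).comp (measurable_fst.prodMk measurable_const))).mul
        (measurable_eE H))
    rw [e1, lswap2 hwb.le hF2m]
    -- a.e. z-computation
    have hne : ∀ᵐ (z : ℝ), z ≠ w := by
      have hsing : ({w} : Set ℝ) = {z | ¬ z ≠ w} := by ext z; simp
      rw [ae_iff, ← hsing]
      exact measure_singleton w
    have e2 : ∫⁻ z in Ioo (0:ℝ) b, ∫⁻ v in Ioo 0 (min w z),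
          (ENNReal.ofReal (v ^ (1 - 2*H)) * eE H (v, w)) * eE H (v, z)
        = ∫⁻ z in Ioo (0:ℝ) b,
            ENNReal.ofReal (|z - w| ^ (2*H - 2)) * ENNReal.ofReal (Iq H) := by
      refine setLIntegral_congr_fun_ae measurableSet_Ioo ?_
      filter_upwards [hne] with z hzw hz
      have hz0 : 0 < z := hz.1
      -- pointwise in v
      have e3 : ∫⁻ v in Ioo (0:ℝ) (min w z),
            (ENNReal.ofReal (v ^ (1 - 2*H)) * eE H (v, w)) * eE H (v, z)
          = ∫⁻ v in Ioo (0:ℝ) (min w z),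
              ENNReal.ofReal (w ^ (H - 1/2) * z ^ (H - 1/2))
                * ENNReal.ofReal (v ^ (1 - 2*H) * ((w - v) ^ (H - 3/2) * (z - v) ^ (H - 3/2))) := by
        refine setLIntegral_congr_fun_ae measurableSet_Ioo (ae_of_all _ (fun v hv => ?_))
        have hv0 : 0 < v := hv.1
        have hvw : v < w := lt_of_lt_of_le hv.2 (min_le_left _ _)
        have hvz : v < z := lt_of_lt_of_le hv.2 (min_le_right _ _)
        rw [eE, eE]
        rw [← ENNReal.ofReal_mul (Real.rpow_nonneg hv0.le _),
          ← ENNReal.ofReal_mul (by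
            exact mul_nonneg (Real.rpow_nonneg hv0.le _)
              (mul_nonneg (Real.rpow_nonneg (by linarith) _) (Real.rpow_nonneg hw0.le _))),
          ← ENNReal.ofReal_mul (by
            exact mul_nonneg (Real.rpow_nonneg hw0.le _) (Real.rpow_nonneg hz0.le _))]
        congr 1
        ring
      rw [e3, lintegral_const_mul' _ _ ENNReal.ofReal_ne_top]
      have hbeta := betaSub' h1 h2 hw0 hz0 (fun hcc => hzw (hcc.symm))
      have e4 : ∫⁻ v in Ioo (0:ℝ) (min w z),
            ENNReal.ofReal (v ^ (1 - 2*H) * ((w - v) ^ (H - 3/2) * (z - v) ^ (H - 3/2)))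
          = ENNReal.ofReal ((w*z) ^ ((1:ℝ)/2 - H) * |z - w| ^ (2*H - 2) * Iq H) := by
        rw [← hbeta.2]
        refine (ofReal_integral_eq_lintegral_ofReal hbeta.1 ?_).symm
        filter_upwards [ae_restrict_mem measurableSet_Ioo] with v hv
        have hvw : v < w := lt_of_lt_of_le hv.2 (min_le_left _ _)
        have hvz : v < z := lt_of_lt_of_le hv.2 (min_le_right _ _)
        exact mul_nonneg (Real.rpow_nonneg hv.1.le _)
          (mul_nonneg (Real.rpow_nonneg (by linarith) _) (Real.rpow_nonneg (by linarith) _))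
      rw [e4, ← ENNReal.ofReal_mul (by
        exact mul_nonneg (Real.rpow_nonneg hw0.le _) (Real.rpow_nonneg hz0.le _))]
      have e5 : w ^ (H - 1/2) * z ^ (H - 1/2) * ((w*z) ^ ((1:ℝ)/2 - H) * |z - w| ^ (2*H - 2) * Iq H)
          = |z - w| ^ (2*H - 2) * Iq H := by
        calc w ^ (H - 1/2) * z ^ (H - 1/2) * ((w*z) ^ ((1:ℝ)/2 - H) * |z - w| ^ (2*H - 2) * Iq H)
            = (w ^ (H - 1/2) * z ^ (H - 1/2)) * ((w*z) ^ ((1:ℝ)/2 - H) * (|z - w| ^ (2*H - 2) * Iq H)) := by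
              ring
          _ = |z - w| ^ (2*H - 2) * Iq H := cancel_q hw0 hz0
      rw [e5, ENNReal.ofReal_mul (Real.rpow_nonneg (abs_nonneg _) _)]
    rw [e2, lintegral_mul_const' _ _ ENNReal.ofReal_ne_top, Dlem h1 h2 hw0 hwb]
  rw [step4, lintegral_mul_const' _ _ ENNReal.ofReal_ne_top]
  -- Step 5 : final one-dimensional integral
  have hInt : IntegrableOn
      (fun w : ℝ => (w ^ (2*H - 1) + (b - w) ^ (2*H - 1)) / (2*H - 1)) (Ioo 0 a) := by
    refine Integrable.div_const ?_ _
    exact (integrableOn_rpow_Ioo (by linarith)).add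
      ((integrableOn_sub_rpow_Ioo (a := (0:ℝ)) (c := b) (by linarith)).mono_set
        (Ioo_subset_Ioo_right hab))
  have hval : ∫ w in Ioo (0:ℝ) a, (w ^ (2*H - 1) + (b - w) ^ (2*H - 1)) / (2*H - 1)
      = (a ^ (2*H) / (2*H) + (b ^ (2*H) - (b - a) ^ (2*H)) / (2*H)) / (2*H - 1) := by
    rw [integral_div, integral_add (integrableOn_rpow_Ioo (by linarith))
      ((integrableOn_sub_rpow_Ioo (a := (0:ℝ)) (c := b) (by linarith)).mono_set
        (Ioo_subset_Ioo_right hab))]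
    rw [set_integral_rpow (by linarith) ha.le,
      set_integral_rpow_sub_left' (by linarith) ha.le hab,
      show 2*H - 1 + 1 = 2*H by ring]
  have hofReal : ∫⁻ w in Ioo (0:ℝ) a,
        ENNReal.ofReal ((w ^ (2*H - 1) + (b - w) ^ (2*H - 1)) / (2*H - 1))
      = ENNReal.ofReal ((a ^ (2*H) / (2*H) + (b ^ (2*H) - (b - a) ^ (2*H)) / (2*H)) / (2*H - 1)) := by
    rw [← hval]
    refine (ofReal_integral_eq_lintegral_ofReal hInt ?_).symm
    filter_upwards [ae_restrict_mem measurableSet_Ioo] with w hw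
    have : 0 < b - w := by have := hw.2; linarith
    exact div_nonneg (add_nonneg (Real.rpow_nonneg hw.1.le _)
      (Real.rpow_nonneg this.le _)) (by linarith)
  rw [hofReal, ← ENNReal.ofReal_mul (by
      exact div_nonneg (add_nonneg (div_nonneg (Real.rpow_nonneg ha.le _) (by linarith))
        (div_nonneg (by
          have hba : (0:ℝ) ≤ b - a := by linarith
          have : (b - a) ^ (2*H) ≤ b ^ (2*H) := Real.rpow_le_rpow hba (by linarith) (by linarith)
          linarith) (by linarith))) (by linarith)),
    ← ENNReal.ofReal_mul (sq_nonneg _)]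
  congr 1
  rw [cH_sq h1 h2]
  have hIq := Iq_pos h1 h2
  have hH0 : H ≠ 0 := by linarith
  have h2H1 : 2*H - 1 ≠ 0 := by linarith
  field_simp
  linear_combination (a ^ (H*2) + b ^ (H*2) - (b - a) ^ (H*2)) * mul_inv_cancel₀ h2H1

lemma KH_prod_integrable {H a b : ℝ} (h1 : 1/2 < H) (h2 : H < 1) (ha : 0 ≤ a) (hab : a ≤ b) :
    IntegrableOn (fun v => KH H a v * KH H b v) (Ioo 0 a) := by
  rcases eq_or_lt_of_le ha with h | h
  · rw [← h, Ioo_self]; exact integrableOn_empty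
  · constructor
    · exact ((measurable_KH H a).mul (measurable_KH H b)).aestronglyMeasurable
    · have hnn : 0 ≤ᶠ[ae (volume.restrict (Ioo (0:ℝ) a))] fun v => KH H a v * KH H b v := by
        filter_upwards [ae_restrict_mem measurableSet_Ioo] with v hv
        exact mul_nonneg (KH_nonneg hv.1.le) (KH_nonneg hv.1.le)
      rw [hasFiniteIntegral_iff_ofReal hnn, cov_lintegral h1 h2 h hab]
      exact ENNReal.ofReal_lt_top

lemma cov_integral {H a b : ℝ} (h1 : 1/2 < H) (h2 : H < 1) (ha : 0 ≤ a) (hab : a ≤ b) :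
    ∫ v in Ioo (0:ℝ) a, KH H a v * KH H b v
      = (a ^ (2*H) + b ^ (2*H) - (b - a) ^ (2*H)) / 2 := by
  rcases eq_or_lt_of_le ha with h | h
  · rw [← h, Ioo_self, Measure.restrict_empty, integral_zero_measure,
      Real.zero_rpow (by linarith : (2:ℝ)*H ≠ 0), sub_zero, zero_add]
    ring
  · have hnn : 0 ≤ᶠ[ae (volume.restrict (Ioo (0:ℝ) a))] fun v => KH H a v * KH H b v := by
      filter_upwards [ae_restrict_mem measurableSet_Ioo] with v hv
      exact mul_nonneg (KH_nonneg hv.1.le) (KH_nonneg hv.1.le)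
    rw [integral_eq_lintegral_of_nonneg_ae hnn
      (((measurable_KH H a).mul (measurable_KH H b)).aestronglyMeasurable),
      cov_lintegral h1 h2 h hab, ENNReal.toReal_ofReal]
    have hba : (0:ℝ) ≤ b - a := by linarith
    have hmono : (b - a) ^ (2*H) ≤ b ^ (2*H) :=
      Real.rpow_le_rpow hba (by linarith) (by linarith)
    have haa : (0:ℝ) ≤ a ^ (2*H) := Real.rpow_nonneg h.le _
    linarith [div_nonneg (by linarith : (0:ℝ) ≤ a ^ (2*H) + b ^ (2*H) - (b-a) ^ (2*H)) (by norm_num : (0:ℝ) ≤ 2)]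

end KHaux

/-- a kernel identity for increments of the Volterra representation. -/
theorem KH_increment_identity (H s r u t : ℝ) (hH : H ∈ Ioo (1/2 : ℝ) 1)
    (hs : 0 ≤ s) (hsr : s < r) (hru : r < u) (hut : u < t) :
    (∫ v in Ioo (0:ℝ) r, KH H r v * (KH H t v - KH H u v))
      - ∫ v in Ioo (0:ℝ) s, KH H s v * (KH H t v - KH H u v)
      = (1/2) * ((t - s) ^ (2 * H) - (u - s) ^ (2 * H)
          - (t - r) ^ (2 * H) + (u - r) ^ (2 * H)) := by
  obtain ⟨h1, h2⟩ := hH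
  have hr : 0 ≤ r := by linarith
  have hrt : r ≤ t := by linarith
  have hru' : r ≤ u := hru.le
  have hst : s ≤ t := by linarith
  have hsu : s ≤ u := by linarith
  have er : ∫ v in Ioo (0:ℝ) r, KH H r v * (KH H t v - KH H u v)
      = (∫ v in Ioo (0:ℝ) r, KH H r v * KH H t v)
        - ∫ v in Ioo (0:ℝ) r, KH H r v * KH H u v := by
    rw [← integral_sub (KHaux.KH_prod_integrable h1 h2 hr hrt)
      (KHaux.KH_prod_integrable h1 h2 hr hru')]
    congr 1; funext v; ring
  have es : ∫ v in Ioo (0:ℝ) s, KH H s v * (KH H t v - KH H u v)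
      = (∫ v in Ioo (0:ℝ) s, KH H s v * KH H t v)
        - ∫ v in Ioo (0:ℝ) s, KH H s v * KH H u v := by
    rw [← integral_sub (KHaux.KH_prod_integrable h1 h2 hs hst)
      (KHaux.KH_prod_integrable h1 h2 hs hsu)]
    congr 1; funext v; ring
  rw [er, es, KHaux.cov_integral h1 h2 hr hrt, KHaux.cov_integral h1 h2 hr hru',
    KHaux.cov_integral h1 h2 hs hst, KHaux.cov_integral h1 h2 hs hsu]
  ring
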